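/- For any real number ε with 0 < ε < 1 − 1/e, there exist a constant C > 0 and a real number Λ with 0 < Λ < 1 such that for all positive integers n and ℓ with ℓ ≤ (1 − 1/e − ε)·n, one has n^{−n}·∑_{j=1}^{ℓ} a(n,j) ≤ C·n^{3/2}·Λ^n. -/

import Mathlib

noncomputable def stirling2 (n j : ℕ) : ℝ :=
  (1 / (Nat.factorial j : ℝ)) *
    ∑ i ∈ Finset.range (j + 1), (-1 : ℝ) ^ i * (Nat.choose j i : ℝ) * ((j - i : ℕ) : ℝ) ^ n

noncomputable def a (n j : ℕ) : ℝ :=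
  (Nat.choose n j : ℝ) * (Nat.factorial j : ℝ) * stirling2 n j

open Finset


noncomputable def T (n j : ℕ) : ℝ :=
  ∑ i ∈ Finset.range (j + 1), (-1 : ℝ) ^ i * (Nat.choose j i : ℝ) * ((j - i : ℕ) : ℝ) ^ n

lemma alt_sum (N : ℕ) : ∑ t ∈ Finset.range (N+1), (-1:ℝ)^t * (N.choose t : ℝ)
    = if N = 0 then 1 else 0 := by
  have := Int.alternating_sum_range_choose (n := N)
  have : ((∑ i ∈ range (N + 1), (-1:ℤ) ^ i * ↑(N.choose i) : ℤ) : ℝ)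
      = ((if N = 0 then 1 else 0 : ℤ) : ℝ) := by rw [this]
  push_cast at this
  simpa using this

lemma T_reflect (n j : ℕ) :
    T n j = ∑ r ∈ Finset.range (j+1), (-1:ℝ)^(j-r) * (j.choose r : ℝ) * (r:ℝ)^n := by
  rw [T, ← Finset.sum_range_reflect]
  apply Finset.sum_congr rfl
  intro i hi
  have hi' := Finset.mem_range.mp hi
  have hij : i ≤ j := by omega
  have h1 : j + 1 - 1 - i = j - i := by omega
  rw [h1, Nat.choose_symm hij]
  have h2 : j - (j - i) = i := by omega
  rw [h2]

lemma T_inv (m n : ℕ) :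
    ∑ j ∈ Finset.range (m+1), (m.choose j : ℝ) * T n j = (m:ℝ)^n := by
  have step1 : ∀ j ∈ Finset.range (m+1),
      (m.choose j : ℝ) * T n j
      = ∑ r ∈ Finset.range (m+1),
          (m.choose j : ℝ) * ((-1:ℝ)^(j-r) * (j.choose r : ℝ) * (r:ℝ)^n) := by
    intro j hj
    have hj' := Finset.mem_range.mp hj
    rw [T_reflect, Finset.mul_sum]
    apply Finset.sum_subset
    · exact Finset.range_subset_range.mpr (by omega)
    · intro r _ hr
      have : j < r := by simpa using Finset.mem_range.not.mp hr |> fun h => by omega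
      rw [Nat.choose_eq_zero_of_lt this]
      simp
  rw [Finset.sum_congr rfl step1, Finset.sum_comm]
  have inner : ∀ r ∈ Finset.range (m+1),
      (∑ j ∈ Finset.range (m+1),
        (m.choose j : ℝ) * ((-1:ℝ)^(j-r) * (j.choose r : ℝ) * (r:ℝ)^n))
      = (if m - r = 0 then 1 else 0) * (m.choose r : ℝ) * (r:ℝ)^n := by
    intro r hr
    have hr' : r ≤ m := by have := Finset.mem_range.mp hr; omega
    rw [Finset.range_eq_Ico, ← Finset.sum_Ico_consecutive _ (Nat.zero_le r) (by omega : r ≤ m+1)]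
    have h0 : (∑ j ∈ Finset.Ico 0 r,
        (m.choose j : ℝ) * ((-1:ℝ)^(j-r) * (j.choose r : ℝ) * (r:ℝ)^n)) = 0 := by
      apply Finset.sum_eq_zero
      intro j hj
      have : j < r := (Finset.mem_Ico.mp hj).2
      rw [Nat.choose_eq_zero_of_lt this]
      simp
    rw [h0, zero_add, Finset.sum_Ico_eq_sum_range]
    have hsub : m + 1 - r = (m - r) + 1 := by omega
    rw [hsub]
    have term : ∀ t ∈ Finset.range ((m-r)+1),
        (m.choose (r+t) : ℝ) * ((-1:ℝ)^((r+t)-r) * ((r+t).choose r : ℝ) * (r:ℝ)^n)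
        = ((-1:ℝ)^t * ((m-r).choose t : ℝ)) * ((m.choose r : ℝ) * (r:ℝ)^n) := by
      intro t ht
      have ht' : t ≤ m - r := by have := Finset.mem_range.mp ht; omega
      have h1 : r + t - r = t := by omega
      have h2 : m.choose (r+t) * (r+t).choose r = m.choose r * (m-r).choose t := by
        have := Nat.choose_mul (n := m) (show r ≤ r + t by omega)
        simpa [Nat.add_sub_cancel_left] using this
      have h2' : (m.choose (r+t) : ℝ) * ((r+t).choose r : ℝ) = (m.choose r : ℝ) * ((m-r).choose t : ℝ) := by
        exact_mod_cast congrArg (Nat.cast : ℕ → ℝ) h2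
      rw [h1]
      linear_combination ((-1:ℝ)^t * (r:ℝ)^n) * h2'
    rw [Finset.sum_congr rfl term, ← Finset.sum_mul, alt_sum]
    by_cases h : m - r = 0 <;> simp [h]
  rw [Finset.sum_congr rfl inner]
  rw [Finset.sum_eq_single m]
  · simp
  · intro r hr hne
    have : m - r ≠ 0 := by have := Finset.mem_range.mp hr; omega
    simp [this]
  · intro h
    exact absurd (Finset.self_mem_range_succ m) h

lemma choose_sym {n j k : ℕ} (hj : j ≤ n) (hk : k ≤ n) :
    n.choose j * (n-j).choose k = n.choose k * (n-k).choose j := by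
  rcases le_or_gt (j+k) n with h | h
  · have h1 := Nat.choose_mul (n := n) (show j ≤ j + k by omega)
    have h2 := Nat.choose_mul (n := n) (show k ≤ k + j by omega)
    rw [Nat.add_sub_cancel_left] at h1 h2
    rw [Nat.add_comm k j] at h2
    rw [show (j+k).choose j = (j+k).choose k from Nat.choose_symm_add] at h1
    rw [← h1, ← h2]
  · have e1 : (n-j).choose k = 0 := Nat.choose_eq_zero_of_lt (by omega)
    have e2 : (n-k).choose j = 0 := Nat.choose_eq_zero_of_lt (by omega)
    rw [e1, e2, Nat.mul_zero, Nat.mul_zero]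

-- key identity
lemma key (n : ℕ) (u : ℝ) :
    ∑ j ∈ Finset.range (n+1), (n.choose j : ℝ) * T n j * (1+u)^(n-j)
    = ∑ k ∈ Finset.range (n+1), (n.choose k : ℝ) * u^k * ((n-k:ℕ):ℝ)^n := by
  have expand : ∀ j ∈ Finset.range (n+1),
      (n.choose j : ℝ) * T n j * (1+u)^(n-j)
      = ∑ k ∈ Finset.range (n+1),
          ((n.choose j : ℝ) * ((n-j).choose k : ℝ)) * u^k * T n j := by
    intro j hj
    have hj' : j ≤ n := by have := Finset.mem_range.mp hj; omega
    have hb : (1+u)^(n-j) = ∑ k ∈ Finset.range (n-j+1), ((n-j).choose k : ℝ) * u^k := by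
      rw [add_comm (1:ℝ) u, add_pow]
      apply Finset.sum_congr rfl
      intro k hk
      ring
    have hb2 : (1+u)^(n-j) = ∑ k ∈ Finset.range (n+1), ((n-j).choose k : ℝ) * u^k := by
      rw [hb]
      apply Finset.sum_subset (Finset.range_subset_range.mpr (by omega))
      intro k _ hk
      have : n - j < k := by have := Finset.mem_range.not.mp hk; omega
      rw [Nat.choose_eq_zero_of_lt this]
      simp
    rw [hb2, Finset.mul_sum]
    apply Finset.sum_congr rfl
    intro k hk
    ring
  rw [Finset.sum_congr rfl expand, Finset.sum_comm]
  apply Finset.sum_congr rfl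
  intro k hk
  have hk' : k ≤ n := by have := Finset.mem_range.mp hk; omega
  have swap : ∀ j ∈ Finset.range (n+1),
      ((n.choose j : ℝ) * ((n-j).choose k : ℝ)) * u^k * T n j
      = ((n.choose k : ℝ) * u^k) * (((n-k).choose j : ℝ) * T n j) := by
    intro j hj
    have hj' : j ≤ n := by have := Finset.mem_range.mp hj; omega
    have h := choose_sym (n := n) (j := j) (k := k) hj' hk'
    have h' : ((n.choose j : ℝ) * ((n-j).choose k : ℝ)) = (n.choose k : ℝ) * ((n-k).choose j : ℝ) := by
      exact_mod_cast congrArg (Nat.cast : ℕ → ℝ) h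
    linear_combination (u^k * T n j) * h'
  rw [Finset.sum_congr rfl swap, ← Finset.mul_sum]
  have restrict : ∑ j ∈ Finset.range (n+1), ((n-k).choose j : ℝ) * T n j
      = ∑ j ∈ Finset.range ((n-k)+1), ((n-k).choose j : ℝ) * T n j := by
    symm
    apply Finset.sum_subset (Finset.range_subset_range.mpr (by omega))
    intro j _ hj
    have : n - k < j := by have := Finset.mem_range.not.mp hj; omega
    rw [Nat.choose_eq_zero_of_lt this]
    simp
  rw [restrict, T_inv]

-- nonnegativity
lemma T_rec (n j : ℕ) : T (n+1) (j+1) = ((j:ℝ)+1) * (T n (j+1) + T n j) := by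
  have split : T (n+1) (j+1) = ((j:ℝ)+1) * T n (j+1)
      - ∑ i ∈ Finset.range (j+2), (-1:ℝ)^i * (i:ℝ) * (((j+1).choose i : ℕ):ℝ) * (((j+1) - i:ℕ):ℝ)^n := by
    rw [T, T, Finset.mul_sum, ← Finset.sum_sub_distrib]
    apply Finset.sum_congr rfl
    intro i hi
    have hi' : i ≤ j+1 := by have := Finset.mem_range.mp hi; omega
    have hc : (((j+1) - i:ℕ):ℝ) = ((j:ℝ)+1) - (i:ℝ) := by
      rw [Nat.cast_sub hi']; push_cast; ring
    rw [pow_succ]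
    nth_rewrite 2 [hc]
    ring
  have S_eq : ∑ i ∈ Finset.range (j+2), (-1:ℝ)^i * (i:ℝ) * (((j+1).choose i : ℕ):ℝ) * (((j+1) - i:ℕ):ℝ)^n
      = -(((j:ℝ)+1) * T n j) := by
    rw [Finset.sum_range_succ']
    simp only [Nat.cast_zero, mul_zero, zero_mul, add_zero]
    rw [T, Finset.mul_sum, ← Finset.sum_neg_distrib]
    apply Finset.sum_congr rfl
    intro i hi
    have hch : (i+1) * (j+1).choose (i+1) = (j+1) * j.choose i := by
      have h := Nat.add_one_mul_choose_eq j i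
      rw [Nat.mul_comm]
      exact h.symm
    have hch' : ((i:ℝ)+1) * (((j+1).choose (i+1) : ℕ):ℝ) = ((j:ℝ)+1) * ((j.choose i : ℕ):ℝ) := by
      exact_mod_cast congrArg (Nat.cast : ℕ → ℝ) hch
    have hsub : (j + 1 - (i+1)) = j - i := by omega
    rw [hsub, pow_succ]
    push_cast
    linear_combination (-(-1:ℝ)^i * ((j - i:ℕ):ℝ)^n) * hch'
  rw [split, S_eq]
  ring

lemma T_nonneg (n j : ℕ) : 0 ≤ T n j := by
  induction n generalizing j with
  | zero =>
    rw [T]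
    simp only [pow_zero, mul_one]
    rw [alt_sum]
    positivity
  | succ n ih =>
    cases j with
    | zero =>
      rw [T]
      simp
    | succ j =>
      rw [T_rec]
      have := ih (j+1)
      have := ih j
      positivity

lemma a_eq (n j : ℕ) : a n j = (n.choose j : ℝ) * T n j := by
  have hf : (Nat.factorial j : ℝ) ≠ 0 := by
    exact_mod_cast Nat.factorial_ne_zero j
  rw [a, stirling2, T]
  field_simp


set_option maxHeartbeats 1000000 in
theorem stmt_1 (ε : ℝ) (hε0 : 0 < ε) (hε1 : ε < 1 - 1 / Real.exp 1) :
    ∃ C Λ : ℝ, 0 < C ∧ 0 < Λ ∧ Λ < 1 ∧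
      ∀ n ℓ : ℕ, 0 < n → 0 < ℓ → (ℓ : ℝ) ≤ (1 - 1 / Real.exp 1 - ε) * n →
        (n : ℝ) ^ (-(n : ℝ)) * ∑ j ∈ Finset.Icc 1 ℓ, a n j ≤
          C * (n : ℝ) ^ ((3 : ℝ) / 2) * Λ ^ n := by
  have hepos := Real.exp_pos 1
  set e := Real.exp 1 with he
  set s : ℝ := 1 / e + ε with hs
  set u : ℝ := e * ε / 2 with hu
  have hu0 : 0 < u := by positivity
  have h1u : 1 < 1 + u := by linarith
  set v : ℝ := u * e⁻¹ with hv
  have hv0 : 0 < v := by positivity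
  set Λ : ℝ := (1 + v) * (1 + u) ^ (-s) with hΛ
  have hΛpos : 0 < Λ := by
    apply mul_pos (by linarith)
    exact Real.rpow_pos_of_pos (by linarith) _
  have hΛlt : Λ < 1 := by
    have hlog : u / (1 + u) ≤ Real.log (1 + u) := by
      have := Real.log_le_sub_one_of_pos (show (0:ℝ) < (1+u)⁻¹ by positivity)
      rw [Real.log_inv] at this
      have h2 : (1+u)⁻¹ - 1 = -(u / (1+u)) := by field_simp; ring
      rw [h2] at this
      linarith
    have hmid : u / e < s * (u / (1 + u)) := by
      rw [div_lt_iff₀ hepos, hs]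
      have hes : (1/e + ε) * e = 1 + e * ε := by field_simp
      rw [mul_comm ((1/e + ε)) (u / (1+u)), mul_assoc, hes]
      rw [div_mul_eq_mul_div, lt_div_iff₀ (by linarith : (0:ℝ) < 1 + u)]
      have : u < e * ε := by rw [hu]; nlinarith
      nlinarith
    have hspos : 0 < s := by positivity
    have h3 : s * (u / (1+u)) ≤ s * Real.log (1+u) :=
      mul_le_mul_of_nonneg_left hlog (le_of_lt hspos)
    have h4 : (1 : ℝ) + v < (1+u) ^ s := by
      rw [Real.rpow_def_of_pos (by linarith : (0:ℝ) < 1 + u), mul_comm (Real.log (1+u)) s]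
      have h5 : 1 + v ≤ Real.exp (u / e) := by
        have := Real.add_one_le_exp (u / e)
        have : v = u / e := by rw [hv]; field_simp
        linarith [Real.add_one_le_exp (u / e)]
      calc (1:ℝ) + v ≤ Real.exp (u/e) := h5
        _ < Real.exp (s * Real.log (1+u)) := Real.exp_lt_exp.mpr (by linarith)
    calc Λ = (1 + v) * ((1+u) ^ s)⁻¹ := by
            rw [hΛ, Real.rpow_neg (by linarith : (0:ℝ) ≤ 1 + u)]
      _ < ((1+u) ^ s) * ((1+u) ^ s)⁻¹ := by
            apply mul_lt_mul_of_pos_right h4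
            exact inv_pos.mpr (Real.rpow_pos_of_pos (by linarith) _)
      _ = 1 := mul_inv_cancel₀ (ne_of_gt (Real.rpow_pos_of_pos (by linarith) _))
  refine ⟨1, Λ, one_pos, hΛpos, hΛlt, ?_⟩
  intro n ℓ hn hℓ hle
  have hαs : (1 : ℝ) - 1/e - ε = 1 - s := by rw [hs]; ring
  rw [hαs] at hle
  have hNpos : (0:ℝ) < (n:ℝ) := by exact_mod_cast hn
  have hℓn : ℓ ≤ n := by
    by_contra h
    push_neg at h
    have : (n:ℝ) < (ℓ:ℝ) := by exact_mod_cast h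
    have hspos : 0 < s := by positivity
    nlinarith
  set S : ℝ := ∑ j ∈ Finset.Icc 1 ℓ, a n j with hS
  have hSnonneg : 0 ≤ S := by
    apply Finset.sum_nonneg
    intro j _
    rw [a_eq]
    exact mul_nonneg (Nat.cast_nonneg _) (T_nonneg n j)
  -- main counting bound
  have main : S * (1+u)^(n-ℓ) ≤ (n:ℝ)^n * (1+v)^n := by
    have step1 : S * (1+u)^(n-ℓ)
        ≤ ∑ j ∈ Finset.range (n+1), (n.choose j : ℝ) * T n j * (1+u)^(n-j) := by
      rw [hS, Finset.sum_mul]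
      have hsub : Finset.Icc 1 ℓ ⊆ Finset.range (n+1) := by
        intro x hx
        have := Finset.mem_Icc.mp hx
        exact Finset.mem_range.mpr (by omega)
      calc ∑ j ∈ Finset.Icc 1 ℓ, a n j * (1+u)^(n-ℓ)
          ≤ ∑ j ∈ Finset.Icc 1 ℓ, (n.choose j : ℝ) * T n j * (1+u)^(n-j) := by
            apply Finset.sum_le_sum
            intro j hj
            rw [a_eq]
            have hjl := Finset.mem_Icc.mp hj
            have hnn : (0:ℝ) ≤ (n.choose j : ℝ) * T n j :=
              mul_nonneg (Nat.cast_nonneg _) (T_nonneg n j)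
            apply mul_le_mul_of_nonneg_left _ hnn
            exact pow_le_pow_right₀ (by linarith) (by omega)
        _ ≤ ∑ j ∈ Finset.range (n+1), (n.choose j : ℝ) * T n j * (1+u)^(n-j) := by
            apply Finset.sum_le_sum_of_subset_of_nonneg hsub
            intro j _ _
            have hnn : (0:ℝ) ≤ (n.choose j : ℝ) * T n j :=
              mul_nonneg (Nat.cast_nonneg _) (T_nonneg n j)
            positivity
    rw [key n u] at step1
    have step2 : ∑ k ∈ Finset.range (n+1), (n.choose k : ℝ) * u^k * ((n-k:ℕ):ℝ)^n
        ≤ ∑ k ∈ Finset.range (n+1), (n.choose k : ℝ) * u^k * ((n:ℝ)^n * (Real.exp (-1))^k) := by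
      apply Finset.sum_le_sum
      intro k hk
      have hkn : k ≤ n := by have := Finset.mem_range.mp hk; omega
      have hnn : (0:ℝ) ≤ (n.choose k : ℝ) * u^k := by positivity
      apply mul_le_mul_of_nonneg_left _ hnn
      have hcast : ((n-k:ℕ):ℝ) = (n:ℝ) - k := by
        rw [Nat.cast_sub hkn]
      have hb : (n:ℝ) - k ≤ (n:ℝ) * Real.exp (-(k/(n:ℝ))) := by
        have := Real.add_one_le_exp (-(k/(n:ℝ)))
        have h6 : (n:ℝ) * (-(k/(n:ℝ)) + 1) = (n:ℝ) - k := by field_simp; ring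
        nlinarith
      calc ((n-k:ℕ):ℝ)^n ≤ ((n:ℝ) * Real.exp (-(k/(n:ℝ))))^n := by
            apply pow_le_pow_left₀ _ _ n
            · rw [hcast]; have : (k:ℝ) ≤ (n:ℝ) := by exact_mod_cast hkn
              linarith
            · rw [hcast]; exact hb
        _ = (n:ℝ)^n * (Real.exp (-(k/(n:ℝ))))^n := mul_pow _ _ _
        _ = (n:ℝ)^n * (Real.exp (-1))^k := by
            have hne : (n:ℝ) ≠ 0 := ne_of_gt hNpos
            rw [← Real.exp_nat_mul, ← Real.exp_nat_mul]
            congr 1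
            field_simp
    have step3 : ∑ k ∈ Finset.range (n+1), (n.choose k : ℝ) * u^k * ((n:ℝ)^n * (Real.exp (-1))^k)
        = (n:ℝ)^n * (1+v)^n := by
      have hexp : Real.exp (-1) = e⁻¹ := by rw [Real.exp_neg]
      have hterm : ∀ k ∈ Finset.range (n+1),
          (n.choose k : ℝ) * u^k * ((n:ℝ)^n * (Real.exp (-1))^k)
          = (n:ℝ)^n * (v^k * 1^(n-k) * (n.choose k : ℝ)) := by
        intro k _
        rw [hexp, hv, mul_pow]
        ring
      rw [Finset.sum_congr rfl hterm, ← Finset.mul_sum, ← add_pow]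
      ring_nf
    linarith [step1, step2, step3.le, step3.ge]
  -- conversion to Λ
  have hup : (1+u) ^ (s*(n:ℝ)) ≤ (1+u)^(n-ℓ) := by
    have : ((1+u):ℝ)^(n-ℓ) = (1+u) ^ (((n-ℓ:ℕ):ℝ)) := by
      rw [Real.rpow_natCast]
    rw [this]
    apply Real.rpow_le_rpow_of_exponent_le (le_of_lt h1u)
    rw [Nat.cast_sub hℓn]
    nlinarith
  have hΛn : (1+v)^n = (1+u) ^ (s*(n:ℝ)) * Λ^n := by
    rw [hΛ, mul_pow, ← Real.rpow_natCast ((1+u)^(-s)) n, ← Real.rpow_mul (by linarith : (0:ℝ) ≤ 1+u)]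
    rw [← mul_assoc, mul_comm ((1+u)^(s*(n:ℝ))) ((1+v)^n), mul_assoc]
    rw [← Real.rpow_add (by linarith : (0:ℝ) < 1+u)]
    have : s * (n:ℝ) + -s * (n:ℝ) = 0 := by ring
    rw [this, Real.rpow_zero, mul_one]
  have hfinal : S ≤ (n:ℝ)^n * Λ^n := by
    have hpow_pos : (0:ℝ) < (1+u) ^ (s*(n:ℝ)) := Real.rpow_pos_of_pos (by linarith) _
    have c1 : S * (1+u)^(s*(n:ℝ)) ≤ S * (1+u)^(n-ℓ) :=
      mul_le_mul_of_nonneg_left hup hSnonneg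
    have c2 : S * (1+u)^(s*(n:ℝ)) ≤ (n:ℝ)^n * ((1+u)^(s*(n:ℝ)) * Λ^n) := by
      rw [← hΛn]; linarith
    have := le_of_mul_le_mul_right (by
      calc S * (1+u)^(s*(n:ℝ)) ≤ (n:ℝ)^n * ((1+u)^(s*(n:ℝ)) * Λ^n) := c2
        _ = ((n:ℝ)^n * Λ^n) * (1+u)^(s*(n:ℝ)) := by ring) hpow_pos
    exact this
  -- final
  have hrpow : (n:ℝ) ^ (-(n:ℝ)) = ((n:ℝ)^n)⁻¹ := by
    rw [Real.rpow_neg (le_of_lt hNpos), Real.rpow_natCast]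
  rw [hrpow]
  have hNn : (0:ℝ) < (n:ℝ)^n := pow_pos hNpos n
  have h7 : ((n:ℝ)^n)⁻¹ * S ≤ Λ^n := by
    rw [inv_mul_le_iff₀ hNn]
    linarith [hfinal]
  have h8 : (1:ℝ) ≤ (n:ℝ) ^ ((3:ℝ)/2) :=
    Real.one_le_rpow (by exact_mod_cast hn) (by norm_num)
  calc ((n:ℝ)^n)⁻¹ * S ≤ Λ^n := h7
    _ = (1 * 1) * Λ^n := by ring
    _ ≤ (1 * (n:ℝ)^((3:ℝ)/2)) * Λ^n := by
        apply mul_le_mul_of_nonneg_right _ (pow_nonneg hΛpos.le n)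
        linarith
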